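/- For finite sets W, X, Y, Z with W ∩ X = ∅ and Y ∩ Z = ∅, it holds that |(W ∪ X) △ (Y ∪ Z)| = |W △ Y| + |X △ Y| + |W △ Z| + |X △ Z| − |W ∪ X| − |Y ∪ Z|. -/
import Mathlib

private lemma card_symmDiff_int {α : Type*} [DecidableEq α] (s t : Finset α) :
    ((symmDiff s t).card : ℤ) = s.card + t.card - 2 * (s ∩ t).card := by
  rw [symmDiff_def, Finset.sup_eq_union, Finset.card_union_of_disjoint (disjoint_sdiff_sdiff)]
  have h1 := Finset.card_sdiff_add_card_inter s t
  have h2 := Finset.card_sdiff_add_card_inter t s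
  rw [Finset.inter_comm] at h2
  push_cast
  omega

private lemma card_inter_split {α : Type*} [DecidableEq α]
    (W X Y Z : Finset α) (hWX : Disjoint W X) (hYZ : Disjoint Y Z) :
    ((W ∪ X) ∩ (Y ∪ Z)).card =
      (W ∩ Y).card + (X ∩ Y).card + (W ∩ Z).card + (X ∩ Z).card := by
  rw [Finset.inter_union_distrib_left, Finset.card_union_of_disjoint
    (hYZ.mono Finset.inter_subset_right Finset.inter_subset_right),
    Finset.union_inter_distrib_right, Finset.union_inter_distrib_right,
    Finset.card_union_of_disjoint (hWX.mono Finset.inter_subset_left Finset.inter_subset_left),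
    Finset.card_union_of_disjoint (hWX.mono Finset.inter_subset_left Finset.inter_subset_left)]
  ring

theorem symmDiff_card_union_partition {α : Type*} [DecidableEq α]
    (W X Y Z : Finset α) (hWX : Disjoint W X) (hYZ : Disjoint Y Z) :
    ((symmDiff (W ∪ X) (Y ∪ Z)).card : ℤ) =
      (symmDiff W Y).card + (symmDiff X Y).card + (symmDiff W Z).card +
        (symmDiff X Z).card - (W ∪ X).card - (Y ∪ Z).card := by
  have hU1 := Finset.card_union_of_disjoint hWX
  have hU2 := Finset.card_union_of_disjoint hYZ
  have hI := card_inter_split W X Y Z hWX hYZ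
  rw [card_symmDiff_int, card_symmDiff_int, card_symmDiff_int, card_symmDiff_int,
    card_symmDiff_int]
  push_cast [hU1, hU2, hI]
  ring
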